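/- arXiv:1511.06339 — 2 statements merged into one kernel-verified Lean document; each statement's English description precedes it below -/
import Mathlib

section
/- Identify T*gl(n,ℝ) with pairs (A,B) of n×n real matrices and let {·,·}_1 be the Lie–Poisson bracket of the semidirect product Lie algebra gl(n)⋉gl(n), defined via matrix gradients. For k ≥ 1 set I_k(A,B) = (1/k)·trace(A^k) and J_k(A,B) = trace(A^{k−1}·B). Then for all k,ℓ ≥ 1 and all (A,B): {I_k, I_ℓ}_1 = 0 and {J_ℓ, I_k}_1(A,B) = (k+ℓ−1)·I_{k+ℓ−1}(A,B). -/
open Matrix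

attribute [local instance] Matrix.normedAddCommGroup Matrix.normedSpace

variable {n : ℕ}

/-- The continuous linear functional `(Ȧ, Ḃ) ↦ trace(GA·Ȧ) + trace(GB·Ḃ)` on
`T*gl(n,ℝ) = gl(n,ℝ) × gl(n,ℝ)`. -/
noncomputable def tracePairing (GA GB : Matrix (Fin n) (Fin n) ℝ) :
    Matrix (Fin n) (Fin n) ℝ × Matrix (Fin n) (Fin n) ℝ →L[ℝ] ℝ :=
  LinearMap.toContinuousLinearMap
    { toFun := fun P => (GA * P.1).trace + (GB * P.2).trace
      map_add' := by
        intro P Q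
        simp [Matrix.mul_add, Matrix.trace_add]
        ring
      map_smul' := by
        intro c P
        simp [Matrix.mul_smul, Matrix.trace_smul]
        ring }

/-- `F` has matrix gradients `(GA, GB)` at `(A,B)`: the Fréchet derivative of `F`
at `(A,B)` is `(Ȧ, Ḃ) ↦ trace(GA·Ȧ) + trace(GB·Ḃ)`. -/
def HasMatrixGradAt (F : Matrix (Fin n) (Fin n) ℝ × Matrix (Fin n) (Fin n) ℝ → ℝ)
    (P : Matrix (Fin n) (Fin n) ℝ × Matrix (Fin n) (Fin n) ℝ)
    (GA GB : Matrix (Fin n) (Fin n) ℝ) : Prop :=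
  HasFDerivAt F (tracePairing GA GB) P

/-- `I_k(A,B) = (1/k)·trace(Aᵏ)`. -/
noncomputable def Ifun (n k : ℕ) (P : Matrix (Fin n) (Fin n) ℝ × Matrix (Fin n) (Fin n) ℝ) : ℝ :=
  (1 / (k : ℝ)) * (P.1 ^ k).trace

/-- `J_k(A,B) = trace(A^{k-1}·B)`. -/
noncomputable def Jfun (n k : ℕ) (P : Matrix (Fin n) (Fin n) ℝ × Matrix (Fin n) (Fin n) ℝ) : ℝ :=
  (P.1 ^ (k - 1) * P.2).trace

/- ### Auxiliary machinery -/

abbrev MatAux (n : ℕ) := Matrix (Fin n) (Fin n) ℝ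

@[simp] lemma tracePairing_apply (GA GB : MatAux n) (P : MatAux n × MatAux n) :
    tracePairing GA GB P = (GA * P.1).trace + (GB * P.2).trace := rfl

lemma trace_mul_std_aux (G : MatAux n) (i j : Fin n) :
    (G * Matrix.single j i 1).trace = G i j := by
  simp [Matrix.trace, Matrix.diag, Matrix.mul_apply, Matrix.single, ite_and,
    Finset.sum_ite_eq, Finset.sum_ite_eq']

lemma trace_ext_aux {G H : MatAux n} (h : ∀ E, (G * E).trace = (H * E).trace) : G = H := by
  ext i j
  have := h (Matrix.single j i 1)
  rwa [trace_mul_std_aux, trace_mul_std_aux] at this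

noncomputable def mulLaux (n : ℕ) : MatAux n →L[ℝ] MatAux n →L[ℝ] MatAux n :=
  LinearMap.toContinuousLinearMap
    { toFun := fun A => LinearMap.toContinuousLinearMap (LinearMap.mul ℝ (MatAux n) A)
      map_add' := by intro A B; ext E; simp [Matrix.add_mul]
      map_smul' := by intro c A; ext E; simp [Matrix.smul_mul] }

@[simp] lemma mulLaux_apply (A B : MatAux n) : mulLaux n A B = A * B := rfl

noncomputable def traceLaux (n : ℕ) : MatAux n →L[ℝ] ℝ :=
  LinearMap.toContinuousLinearMap (Matrix.traceLinearMap (Fin n) ℝ ℝ)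

@[simp] lemma traceLaux_apply (A : MatAux n) : traceLaux n A = A.trace := rfl

noncomputable def powDaux (A : MatAux n) (k : ℕ) : MatAux n →L[ℝ] MatAux n :=
  ∑ i ∈ Finset.range k, (mulLaux n (A ^ i)).comp ((mulLaux n).flip (A ^ (k - 1 - i)))

@[simp] lemma powDaux_apply (A E : MatAux n) (k : ℕ) :
    powDaux A k E = ∑ i ∈ Finset.range k, A ^ i * E * A ^ (k - 1 - i) := by
  simp [powDaux, ContinuousLinearMap.sum_apply, mul_assoc]
  exact Finset.sum_congr rfl fun _ _ => rfl

lemma hasFDerivAt_pow_aux (A : MatAux n) (k : ℕ) :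
    HasFDerivAt (fun X : MatAux n => X ^ k) (powDaux A k) A := by
  induction k with
  | zero =>
      simpa [powDaux] using (hasFDerivAt_const (1 : MatAux n) A)
  | succ k ih =>
      have h := (mulLaux n).hasFDerivAt_of_bilinear ih (hasFDerivAt_id A)
      erw [show (fun y : MatAux n => ((mulLaux n) (y ^ k)) (id y)) = fun X : MatAux n => X ^ (k + 1)
        from funext fun X => by simp [pow_succ]] at h
      refine h.congr_fderiv (Eq.symm ?_)
      refine ContinuousLinearMap.ext fun E => ?_
      have hR : (((ContinuousLinearMap.precompR (MatAux n) (mulLaux n)) (A ^ k))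
          (ContinuousLinearMap.id ℝ (MatAux n)) +
          ((ContinuousLinearMap.precompL (MatAux n) (mulLaux n)) (powDaux A k)) (id A)) E
          = A ^ k * E + (powDaux A k E) * A := by
        rfl
      erw [hR]
      rw [powDaux_apply, powDaux_apply]
      simp only [Nat.add_sub_cancel, Finset.sum_range_succ, Nat.sub_self, pow_zero, mul_one]
      have hs : ∀ i ∈ Finset.range k,
          A ^ i * E * A ^ (k - i) = A ^ i * E * A ^ (k - 1 - i) * A := by
        intro i hi
        have hik := Finset.mem_range.mp hi
        have : k - i = (k - 1 - i) + 1 := by omega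
        rw [this, pow_succ, ← mul_assoc]
      rw [Finset.sum_congr rfl hs, ← Finset.sum_mul]
      exact add_comm _ _

lemma trace_powDaux (A E : MatAux n) (k : ℕ) :
    (powDaux A k E).trace = (k : ℝ) * (A ^ (k - 1) * E).trace := by
  rw [powDaux_apply, Matrix.trace_sum]
  have hs : ∀ i ∈ Finset.range k,
      (A ^ i * E * A ^ (k - 1 - i)).trace = (A ^ (k - 1) * E).trace := by
    intro i hi
    have hik := Finset.mem_range.mp hi
    rw [Matrix.trace_mul_cycle, ← pow_add]
    have hexp : k - 1 - i + i = k - 1 := by omega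
    rw [hexp]
  rw [Finset.sum_congr rfl hs, Finset.sum_const, Finset.card_range, nsmul_eq_mul]

/-- The derivative of `Ifun n k` at `(A, B)`. -/
lemma hasFDerivAt_Ifun_aux (k : ℕ) (A B : MatAux n) :
    HasFDerivAt (Ifun n k) ((1 / (k : ℝ)) •
      ((traceLaux n).comp ((powDaux A k).comp (ContinuousLinearMap.fst ℝ (MatAux n) (MatAux n)))))
      (A, B) := by
  have h1 : HasFDerivAt (fun P : MatAux n × MatAux n => P.1)
      (ContinuousLinearMap.fst ℝ (MatAux n) (MatAux n)) (A, B) := hasFDerivAt_fst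
  have h2 := (hasFDerivAt_pow_aux A k).comp (A, B) h1
  have h3 := ((traceLaux n).hasFDerivAt.comp (A, B) h2).const_mul (1 / (k : ℝ))
  exact h3

/-- The derivative of `Jfun n ℓ` at `(A, B)`. -/
lemma hasFDerivAt_Jfun_aux (l : ℕ) (A B : MatAux n) :
    HasFDerivAt (Jfun n l) ((traceLaux n).comp
      (((mulLaux n).precompR (MatAux n × MatAux n) (A ^ (l - 1))
          (ContinuousLinearMap.snd ℝ (MatAux n) (MatAux n)) +
        (mulLaux n).precompL (MatAux n × MatAux n)
          ((powDaux A (l - 1)).comp (ContinuousLinearMap.fst ℝ (MatAux n) (MatAux n))) B)))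
      (A, B) := by
  have h1 : HasFDerivAt (fun P : MatAux n × MatAux n => P.1)
      (ContinuousLinearMap.fst ℝ (MatAux n) (MatAux n)) (A, B) := hasFDerivAt_fst
  have h2 := (hasFDerivAt_pow_aux A (l - 1)).comp (A, B) h1
  have h4 : HasFDerivAt (fun P : MatAux n × MatAux n => P.2)
      (ContinuousLinearMap.snd ℝ (MatAux n) (MatAux n)) (A, B) := hasFDerivAt_snd
  have h5 := (mulLaux n).hasFDerivAt_of_bilinear h2 h4
  exact (traceLaux n).hasFDerivAt.comp (A, B) h5

/-- Lie–Poisson brackets (for the semidirect product `gl(n)⋉gl(n)`) of the invariants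
`I_k`, `J_k` on `T*gl(n,ℝ)`: `{I_k, I_ℓ}₁ = 0` and `{J_ℓ, I_k}₁ = (k+ℓ−1)·I_{k+ℓ−1}`, where
`{F,G}₁ = trace(A·(∇_B F·∇_A G − ∇_B G·∇_A F)) + trace(B·(∇_B F·∇_B G − ∇_B G·∇_B F))`. -/
theorem lie_poisson_brackets_IJ (hn : 1 ≤ n) (k ℓ : ℕ) (hk : 1 ≤ k) (hl : 1 ≤ ℓ)
    (A B IkA IkB IlA IlB JlA JlB : Matrix (Fin n) (Fin n) ℝ)
    (hIk : HasMatrixGradAt (Ifun n k) (A, B) IkA IkB)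
    (hIl : HasMatrixGradAt (Ifun n ℓ) (A, B) IlA IlB)
    (hJl : HasMatrixGradAt (Jfun n ℓ) (A, B) JlA JlB) :
    ((A * (IkB * IlA - IlB * IkA)).trace + (B * (IkB * IlB - IlB * IkB)).trace = 0)
    ∧ ((A * (JlB * IkA - IkB * JlA)).trace + (B * (JlB * IkB - IkB * JlB)).trace
        = ((k + ℓ - 1 : ℕ) : ℝ) * Ifun n (k + ℓ - 1) (A, B)) := by
  -- extract gradients of Ifun
  have gradI : ∀ (m : ℕ), 1 ≤ m → ∀ (GA GB : MatAux n),
      HasMatrixGradAt (Ifun n m) (A, B) GA GB → GA = A ^ (m - 1) ∧ GB = 0 := by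
    intro m hm GA GB hG
    have huniq := hG.unique (hasFDerivAt_Ifun_aux m A B)
    have hmne : (m : ℝ) ≠ 0 := Nat.cast_ne_zero.mpr (by omega)
    constructor
    · refine trace_ext_aux fun E => ?_
      have := ContinuousLinearMap.ext_iff.mp huniq (E, 0)
      simp only [tracePairing_apply, ContinuousLinearMap.smul_apply,
        ContinuousLinearMap.comp_apply, ContinuousLinearMap.coe_fst', traceLaux_apply,
        smul_eq_mul, Matrix.mul_zero, Matrix.trace_zero, add_zero] at this
      rw [this, trace_powDaux]
      field_simp
    · refine trace_ext_aux fun E => ?_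
      have := ContinuousLinearMap.ext_iff.mp huniq (0, E)
      simp only [tracePairing_apply, ContinuousLinearMap.smul_apply,
        ContinuousLinearMap.comp_apply, ContinuousLinearMap.coe_fst', traceLaux_apply,
        smul_eq_mul, Matrix.mul_zero, Matrix.trace_zero, zero_add] at this
      simp only [Matrix.zero_mul, Matrix.trace_zero]
      rw [this]
      simp [powDaux_apply, Matrix.zero_mul, Matrix.mul_zero]
  obtain ⟨hIkA, hIkB⟩ := gradI k hk IkA IkB hIk
  obtain ⟨hIlA, hIlB⟩ := gradI ℓ hl IlA IlB hIl
  -- extract ∇_B J_ℓ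
  have hJlB : JlB = A ^ (ℓ - 1) := by
    have huniq := hJl.unique (hasFDerivAt_Jfun_aux ℓ A B)
    refine trace_ext_aux fun E => ?_
    have := ContinuousLinearMap.ext_iff.mp huniq (0, E)
    have h0 : (JlB * E).trace = (tracePairing JlA JlB) (0, E) := by simp
    rw [h0, this]
    show (traceLaux n) (A ^ (ℓ - 1) * E + powDaux A (ℓ - 1) 0 * B) = _
    simp
  constructor
  · simp [hIkB, hIlB]
  · rw [hIkA, hIkB, hJlB]
    have hA : A * (A ^ (ℓ - 1) * A ^ (k - 1)) = A ^ (k + ℓ - 1) := by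
      rw [← mul_assoc, ← pow_succ', ← pow_add]
      congr 1
      omega
    have hcast : ((k + ℓ - 1 : ℕ) : ℝ) ≠ 0 := Nat.cast_ne_zero.mpr (by omega)
    rw [Ifun]
    simp only [Matrix.mul_zero, Matrix.zero_mul, sub_zero, Matrix.trace_zero, add_zero, hA]
    rw [← mul_assoc, mul_one_div, div_self hcast, one_mul]
end

section
/- Identify T*gl(n,ℝ) with pairs (A,B) of n×n real matrices and let {·,·}_1 be the Lie–Poisson bracket of the semidirect product Lie algebra gl(n)⋉gl(n), defined via matrix gradients. For k ≥ 1 set J_k(A,B) = trace(A^{k−1}·B). Then for all k,ℓ ≥ 1 and all (A,B): {J_k, J_ℓ}_1(A,B) = (ℓ−k)·J_{k+ℓ−1}(A,B), where the right-hand side means the (ℓ−k)-fold integer multiple of J_{k+ℓ−1}(A,B). -/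
open Matrix

attribute [local instance] Matrix.normedAddCommGroup Matrix.normedSpace

variable {n : ℕ}

section Aux

/-- Abbreviation for the space of `n × n` real matrices. -/
abbrev Mn (n : ℕ) := Matrix (Fin n) (Fin n) ℝ

/-- Matrix multiplication as a continuous bilinear map. -/
noncomputable def mulCLM (n : ℕ) : Mn n →L[ℝ] Mn n →L[ℝ] Mn n :=
  LinearMap.toContinuousLinearMap
    (((LinearMap.toContinuousLinearMap :
        (Mn n →ₗ[ℝ] Mn n) ≃ₗ[ℝ] (Mn n →L[ℝ] Mn n)) :
        (Mn n →ₗ[ℝ] Mn n) →ₗ[ℝ] (Mn n →L[ℝ] Mn n)).comp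
      (LinearMap.mul ℝ (Mn n)))

@[simp] lemma mulCLM_apply (X Y : Mn n) : mulCLM n X Y = X * Y := rfl

/-- `(X, Y) ↦ trace (X * Y)` as a continuous bilinear map. -/
noncomputable def tmulCLM (n : ℕ) : Mn n →L[ℝ] Mn n →L[ℝ] ℝ :=
  (ContinuousLinearMap.compL ℝ (Mn n) (Mn n) ℝ
    (LinearMap.toContinuousLinearMap (Matrix.traceLinearMap (Fin n) ℝ ℝ))).comp (mulCLM n)

@[simp] lemma tmulCLM_apply (X Y : Mn n) : tmulCLM n X Y = (X * Y).trace := rfl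

/-- Derivative of `P ↦ P.1 ^ m` at `(A, B)`. -/
noncomputable def powD (A : Mn n) (m : ℕ) : Mn n × Mn n →L[ℝ] Mn n :=
  ∑ i ∈ Finset.range m,
    ((mulCLM n (A ^ i)).comp ((mulCLM n).flip (A ^ (m - 1 - i)))).comp
      (ContinuousLinearMap.fst ℝ (Mn n) (Mn n))

lemma powD_apply (A : Mn n) (m : ℕ) (P : Mn n × Mn n) :
    powD A m P = ∑ i ∈ Finset.range m, A ^ i * P.1 * A ^ (m - 1 - i) := by
  simp [powD, mul_assoc]
  rfl

lemma hasFDerivAt_pow_fst (A B : Mn n) (m : ℕ) :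
    HasFDerivAt (fun P : Mn n × Mn n => P.1 ^ m) (powD A m) (A, B) := by
  induction m with
  | zero => simpa [powD] using hasFDerivAt_const (1 : Mn n) ((A, B) : Mn n × Mn n)
  | succ m ih =>
    have h := (mulCLM n).hasFDerivAt_of_bilinear ih
      (hasFDerivAt_fst (p := ((A, B) : Mn n × Mn n)))
    have hfun : (fun P : Mn n × Mn n => mulCLM n (P.1 ^ m) P.1)
        = fun P : Mn n × Mn n => P.1 ^ (m + 1) := by
      funext P; simp [pow_succ]
    erw [hfun] at h
    refine h.congr_fderiv (Eq.symm ?_)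
    apply ContinuousLinearMap.ext
    intro P
    change powD A (m + 1) P = A ^ m * P.1 + powD A m P * A
    simp only [powD_apply]
    rw [Finset.sum_range_succ]
    have hterm : ∀ i ∈ Finset.range m,
        A ^ i * P.1 * A ^ (m + 1 - 1 - i) = A ^ i * P.1 * A ^ (m - 1 - i) * A := by
      intro i hi
      rw [Finset.mem_range] at hi
      have h4 : m + 1 - 1 - i = (m - 1 - i) + 1 := by omega
      rw [h4, pow_succ, ← mul_assoc]
    rw [Finset.sum_congr rfl hterm, ← Finset.sum_mul]
    simp [add_comm]

/-- The explicit matrix gradients of `J_{m+1}`. -/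
lemma hasMatrixGradAt_J (A B : Mn n) (m : ℕ) :
    HasMatrixGradAt (Jfun n (m + 1)) (A, B)
      (∑ i ∈ Finset.range m, A ^ (m - 1 - i) * B * A ^ i) (A ^ m) := by
  have h := (tmulCLM n).hasFDerivAt_of_bilinear (hasFDerivAt_pow_fst A B m)
    (hasFDerivAt_snd (p := ((A, B) : Mn n × Mn n)))
  have hfun : (fun P : Mn n × Mn n => tmulCLM n (P.1 ^ m) P.2) = Jfun n (m + 1) := by
    funext P; simp [Jfun]
  erw [hfun] at h
  unfold HasMatrixGradAt
  refine h.congr_fderiv (Eq.symm ?_)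
  apply ContinuousLinearMap.ext
  intro P
  have hTP : ∀ GA GB : Mn n, tracePairing GA GB P = (GA * P.1).trace + (GB * P.2).trace := by
    intro GA GB; rfl
  rw [hTP]
  change _ = (A ^ m * P.2).trace + (powD A m P * B).trace
  simp only [powD_apply, Finset.sum_mul, Matrix.trace_sum]
  rw [add_comm]
  congr 1
  apply Finset.sum_congr rfl
  intro i _
  have h5 : A ^ (m - 1 - i) * B * A ^ i * P.1 = (A ^ (m - 1 - i) * B) * (A ^ i * P.1) := by
    rw [mul_assoc]
  rw [h5, Matrix.trace_mul_comm]
  simp [mul_assoc]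

/-- Nondegeneracy of the trace pairing. -/
lemma trace_ext {G G' : Mn n} (h : ∀ X : Mn n, (G * X).trace = (G' * X).trace) : G = G' := by
  ext i j
  have := h (Matrix.single j i 1)
  simpa [Matrix.trace, Matrix.diag, Matrix.mul_apply, Matrix.single,
    ite_and, Finset.sum_ite_eq, Finset.sum_ite_eq'] using this

lemma grad_eq {F : Mn n × Mn n → ℝ} {P : Mn n × Mn n} {GA GB GA' GB' : Mn n}
    (h : HasMatrixGradAt F P GA GB) (h' : HasMatrixGradAt F P GA' GB') :
    GA = GA' ∧ GB = GB' := by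
  have hu : tracePairing GA GB = tracePairing GA' GB' := h.unique h'
  have happ : ∀ X Y : Mn n,
      (GA * X).trace + (GB * Y).trace = (GA' * X).trace + (GB' * Y).trace := by
    intro X Y
    have := congrFun (congrArg (fun L : Mn n × Mn n →L[ℝ] ℝ => (L : Mn n × Mn n → ℝ)) hu) (X, Y)
    exact this
  constructor
  · apply trace_ext
    intro X
    have := happ X 0
    simpa using this
  · apply trace_ext
    intro Y
    have := happ 0 Y
    simpa using this

end Aux

/-- Lie–Poisson bracket (for the semidirect product `gl(n)⋉gl(n)`) of the invariants
`J_k` on `T*gl(n,ℝ)`: `{J_k, J_ℓ}₁ = (ℓ−k)·J_{k+ℓ−1}`, where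
`{F,G}₁ = trace(A·(∇_B F·∇_A G − ∇_B G·∇_A F)) + trace(B·(∇_B F·∇_B G − ∇_B G·∇_B F))`. -/
theorem lie_poisson_brackets_JJ (hn : 1 ≤ n) (k ℓ : ℕ) (hk : 1 ≤ k) (hl : 1 ≤ ℓ)
    (A B JkA JkB JlA JlB : Matrix (Fin n) (Fin n) ℝ)
    (hJk : HasMatrixGradAt (Jfun n k) (A, B) JkA JkB)
    (hJl : HasMatrixGradAt (Jfun n ℓ) (A, B) JlA JlB) :
    (A * (JkB * JlA - JlB * JkA)).trace + (B * (JkB * JlB - JlB * JkB)).trace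
      = ((ℓ : ℤ) - (k : ℤ)) • Jfun n (k + ℓ - 1) (A, B) := by
  obtain ⟨m, rfl⟩ : ∃ m, k = m + 1 := ⟨k - 1, by omega⟩
  obtain ⟨p, rfl⟩ : ∃ p, ℓ = p + 1 := ⟨ℓ - 1, by omega⟩
  obtain ⟨hkA, hkB⟩ := grad_eq hJk (hasMatrixGradAt_J A B m)
  obtain ⟨hlA, hlB⟩ := grad_eq hJl (hasMatrixGradAt_J A B p)
  subst hkA hkB hlA hlB
  have h2 : (B * (A ^ m * A ^ p - A ^ p * A ^ m)).trace = 0 := by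
    rw [← pow_add, ← pow_add, add_comm]
    simp
  have key : ∀ q r : ℕ,
      (A * (A ^ q * ∑ i ∈ Finset.range r, A ^ (r - 1 - i) * B * A ^ i)).trace
        = (r : ℝ) * (A ^ (q + r) * B).trace := by
    intro q r
    rw [Finset.mul_sum, Finset.mul_sum, Matrix.trace_sum]
    have hterm : ∀ i ∈ Finset.range r,
        (A * (A ^ q * (A ^ (r - 1 - i) * B * A ^ i))).trace
          = (A ^ (q + r) * B).trace := by
      intro i hi
      rw [Finset.mem_range] at hi
      have h1 : A * (A ^ q * (A ^ (r - 1 - i) * B * A ^ i))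
          = A ^ (1 + q + (r - 1 - i)) * B * A ^ i := by
        simp [pow_add, pow_one, mul_assoc]
      rw [h1, Matrix.trace_mul_comm, ← mul_assoc, ← pow_add]
      have h3 : i + (1 + q + (r - 1 - i)) = q + r := by omega
      rw [h3]
    rw [Finset.sum_congr rfl hterm, Finset.sum_const, Finset.card_range, nsmul_eq_mul]
  rw [mul_sub, Matrix.trace_sub, h2, add_zero, key m p, key p m]
  have hJ : Jfun n (m + 1 + (p + 1) - 1) (A, B) = (A ^ (m + p) * B).trace := by
    have : m + 1 + (p + 1) - 1 - 1 = m + p := by omega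
    simp [Jfun, this]
  rw [hJ]
  have : p + m = m + p := by omega
  rw [this]
  push_cast [zsmul_eq_mul]
  ring
end
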